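/- Let $a > 0$, $b \in (0,1)$, and $R \in [a, \infty)$ with $R < \infty$. Let $f$ be a nonnegative Radon measure on $(0,\infty)$, $\varphi : (0,\infty) \to [0,\infty)$ continuous, and $g \in L^1([a,R])$ nonnegative such that $\frac{1}{z}\int_{[bz,z]} \varphi(x)\, f(dx) \le g(z)$ for all $z \in [a,R]$. Then $\int_{[a,R]} \varphi(x)\, f(dx) \le \frac{1}{|\ln b|}\int_a^R g(z)\, dz + R\, g(R)$. -/

import Mathlib

open MeasureTheory Set

theorem stmt_0
    (a b R : ℝ) (ha : 0 < a) (hb0 : 0 < b) (hb1 : b < 1) (haR : a ≤ R)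
    (f : Measure ℝ) [IsLocallyFiniteMeasure f]
    (φ g : ℝ → ℝ)
    (hφc : ContinuousOn φ (Set.Ioi 0)) (hφ0 : ∀ x, 0 ≤ φ x)
    (hg : IntegrableOn g (Set.Icc a R)) (hg0 : ∀ z, 0 ≤ g z)
    (havg : ∀ z ∈ Set.Icc a R,
      (∫⁻ x in Set.Icc (b * z) z, ENNReal.ofReal (φ x) ∂f) ≤ ENNReal.ofReal (z * g z)) :
    (∫⁻ x in Set.Icc a R, ENNReal.ofReal (φ x) ∂f) ≤
      ENNReal.ofReal ((∫ z in a..R, g z) / |Real.log b| + R * g R) := by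
  have hR0 : 0 < R := lt_of_lt_of_le ha haR
  have hlogb : Real.log b < 0 := Real.log_neg hb0 hb1
  have habs : |Real.log b| = Real.log b⁻¹ := by
    rw [Real.log_inv]; exact abs_of_neg hlogb
  have hL : 0 < Real.log b⁻¹ := by
    rw [← habs]; exact abs_pos.mpr (ne_of_lt hlogb)
  set c : ENNReal := ENNReal.ofReal (Real.log b⁻¹) with hc
  have hc0 : c ≠ 0 := (ENNReal.ofReal_pos.mpr hL).ne'
  -- modified φ, continuous everywhere
  set φ' : ℝ → ℝ := fun x => φ (max x a) with hφ'
  have hφ'c : Continuous φ' := by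
    refine hφc.comp_continuous (continuous_id.max continuous_const) ?_
    intro x; exact lt_of_lt_of_le ha (le_max_right x a)
  have hφ'eq : ∀ x, a ≤ x → φ' x = φ x := by
    intro x hx; simp [hφ', max_eq_left hx]
  have hφ'm : Measurable fun x => ENNReal.ofReal (φ' x) := hφ'c.measurable.ennreal_ofReal
  set ν : Measure ℝ := f.restrict (Icc a R) with hν
  haveI : IsFiniteMeasure ν := by
    constructor
    rw [hν, Measure.restrict_apply_univ]
    exact isCompact_Icc.measure_lt_top
  set F : ℝ → ℝ → ENNReal := fun z x =>
    ENNReal.ofReal z⁻¹ * (Icc (b * z) z).indicator (fun y => ENNReal.ofReal (φ' y)) x with hF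
  -- measurability of uncurried F
  have hS : MeasurableSet {p : ℝ × ℝ | b * p.1 ≤ p.2 ∧ p.2 ≤ p.1} := by
    have h1 : MeasurableSet {p : ℝ × ℝ | b * p.1 ≤ p.2} :=
      measurableSet_le (measurable_fst.const_mul b) measurable_snd
    have h2 : MeasurableSet {p : ℝ × ℝ | p.2 ≤ p.1} :=
      measurableSet_le measurable_snd measurable_fst
    exact h1.inter h2
  have hFmeas : Measurable (Function.uncurry F) := by
    have heq : Function.uncurry F = fun p : ℝ × ℝ =>
        ENNReal.ofReal p.1⁻¹ *
          ({p : ℝ × ℝ | b * p.1 ≤ p.2 ∧ p.2 ≤ p.1}).indicator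
            (fun q => ENNReal.ofReal (φ' q.2)) p := by
      funext p
      simp only [Function.uncurry, hF, Set.indicator_apply, Set.mem_Icc, Set.mem_setOf_eq]
    rw [heq]
    exact (measurable_fst.inv.ennreal_ofReal).mul
      ((hφ'm.comp measurable_snd).indicator hS)
  -- Step A: pointwise-in-z bound
  have hA : ∀ z ∈ Icc a R, (∫⁻ x, F z x ∂ν) ≤ ENNReal.ofReal (g z) := by
    intro z hz
    have hz0 : 0 < z := lt_of_lt_of_le ha hz.1
    calc (∫⁻ x, F z x ∂ν)
        = ENNReal.ofReal z⁻¹ *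
            ∫⁻ x, (Icc (b * z) z).indicator (fun y => ENNReal.ofReal (φ' y)) x ∂ν :=
          lintegral_const_mul' _ _ ENNReal.ofReal_ne_top
      _ = ENNReal.ofReal z⁻¹ * ∫⁻ x in Icc (b * z) z, ENNReal.ofReal (φ' x) ∂ν := by
          rw [lintegral_indicator measurableSet_Icc _]
      _ = ENNReal.ofReal z⁻¹ * ∫⁻ x in Icc (b * z) z ∩ Icc a R, ENNReal.ofReal (φ' x) ∂f := by
          rw [hν, Measure.restrict_restrict measurableSet_Icc]
      _ = ENNReal.ofReal z⁻¹ * ∫⁻ x in Icc (b * z) z ∩ Icc a R, ENNReal.ofReal (φ x) ∂f := by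
          congr 1
          refine setLIntegral_congr_fun (measurableSet_Icc.inter measurableSet_Icc) ?_
          intro x hx
          simp only [hφ'eq x hx.2.1]
      _ ≤ ENNReal.ofReal z⁻¹ * ∫⁻ x in Icc (b * z) z, ENNReal.ofReal (φ x) ∂f := by
          gcongr
          exact inter_subset_left
      _ ≤ ENNReal.ofReal z⁻¹ * ENNReal.ofReal (z * g z) := by
          gcongr
          exact havg z hz
      _ = ENNReal.ofReal (g z) := by
          rw [← ENNReal.ofReal_mul (by positivity)]
          congr 1
          field_simp
  -- inner integral lower bound for x ∈ Icc a (b*R)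
  have hG : ∀ x ∈ Icc a (b * R),
      c * ENNReal.ofReal (φ' x) ≤ ∫⁻ z in Icc a R, F z x := by
    intro x hx
    have hx0 : 0 < x := lt_of_lt_of_le ha hx.1
    have hxb : x ≤ x / b := by
      rw [le_div_iff₀ hb0]; nlinarith
    have hsub : Icc x (x / b) ⊆ Icc a R := by
      intro z hz
      refine ⟨le_trans hx.1 hz.1, le_trans hz.2 ?_⟩
      rw [div_le_iff₀ hb0]
      nlinarith [hx.2]
    have hmem : ∀ z : ℝ, (b * z ≤ x ∧ x ≤ z) ↔ (x ≤ z ∧ z ≤ x / b) := by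
      intro z
      rw [le_div_iff₀ hb0]
      have h := mul_comm b z
      constructor <;> rintro ⟨h1, h2⟩ <;> constructor <;> linarith
    have hFeq : ∀ z : ℝ, F z x =
        (Icc x (x / b)).indicator
          (fun z => ENNReal.ofReal z⁻¹ * ENNReal.ofReal (φ' x)) z := by
      intro z
      simp only [hF, Set.indicator_apply, Set.mem_Icc]
      by_cases h : b * z ≤ x ∧ x ≤ z
      · rw [if_pos h, if_pos ((hmem z).mp h)]
      · rw [if_neg h, if_neg (fun hh => h ((hmem z).mpr hh)), mul_zero]
    have hIcc : (∫⁻ z in Icc x (x / b), ENNReal.ofReal z⁻¹) = c := by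
      have hcont : ContinuousOn (fun z : ℝ => z⁻¹) (Icc x (x / b)) :=
        continuousOn_id.inv₀ fun z hz => (lt_of_lt_of_le hx0 hz.1).ne'
      have hint : IntegrableOn (fun z : ℝ => z⁻¹) (Icc x (x / b)) :=
        hcont.integrableOn_compact isCompact_Icc
      have hnn : 0 ≤ᵐ[volume.restrict (Icc x (x / b))] fun z : ℝ => z⁻¹ := by
        filter_upwards [ae_restrict_mem measurableSet_Icc] with z hz
        exact inv_nonneg.2 (le_of_lt (lt_of_lt_of_le hx0 hz.1))
      rw [← MeasureTheory.ofReal_integral_eq_lintegral_ofReal hint hnn]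
      rw [hc]
      congr 1
      rw [MeasureTheory.integral_Icc_eq_integral_Ioc,
        ← intervalIntegral.integral_of_le hxb,
        integral_inv (by
          rw [Set.uIcc_of_le hxb]
          intro h0
          exact absurd h0.1 (not_le.mpr hx0))]
      congr 1
      field_simp
    calc c * ENNReal.ofReal (φ' x)
        = (∫⁻ z in Icc x (x / b), ENNReal.ofReal z⁻¹) * ENNReal.ofReal (φ' x) := by
          rw [hIcc]
      _ = ∫⁻ z in Icc x (x / b), ENNReal.ofReal z⁻¹ * ENNReal.ofReal (φ' x) := by
          rw [lintegral_mul_const' _ _ ENNReal.ofReal_ne_top]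
      _ = ∫⁻ z in Icc x (x / b) ∩ Icc a R,
            ENNReal.ofReal z⁻¹ * ENNReal.ofReal (φ' x) := by
          rw [inter_eq_left.mpr hsub]
      _ = ∫⁻ z in Icc a R,
            (Icc x (x / b)).indicator
              (fun z => ENNReal.ofReal z⁻¹ * ENNReal.ofReal (φ' x)) z := by
          rw [← Measure.restrict_restrict measurableSet_Icc,
            lintegral_indicator measurableSet_Icc _]
      _ = ∫⁻ z in Icc a R, F z x := by
          refine lintegral_congr fun z => ?_
          rw [hFeq z]
      _ ≤ ∫⁻ z in Icc a R, F z x := le_rfl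
  -- Tonelli swap
  haveI : SigmaFinite ν := inferInstance
  have swap : (∫⁻ z in Icc a R, ∫⁻ x, F z x ∂ν) = ∫⁻ x, (∫⁻ z in Icc a R, F z x) ∂ν :=
    lintegral_lintegral_swap hFmeas.aemeasurable
  -- upper bound on the z-integral
  have hI0 : 0 ≤ ∫ z in a..R, g z :=
    intervalIntegral.integral_nonneg haR fun x _ => hg0 x
  have step1 : (∫⁻ z in Icc a R, ∫⁻ x, F z x ∂ν) ≤ ENNReal.ofReal (∫ z in a..R, g z) := by
    calc (∫⁻ z in Icc a R, ∫⁻ x, F z x ∂ν)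
        ≤ ∫⁻ z in Icc a R, ENNReal.ofReal (g z) := by
          refine lintegral_mono_ae ?_
          filter_upwards [ae_restrict_mem measurableSet_Icc] with z hz
          exact hA z hz
      _ = ENNReal.ofReal (∫ z in Icc a R, g z) :=
          (MeasureTheory.ofReal_integral_eq_lintegral_ofReal hg
            (Filter.Eventually.of_forall fun z => hg0 z)).symm
      _ = ENNReal.ofReal (∫ z in a..R, g z) := by
          rw [MeasureTheory.integral_Icc_eq_integral_Ioc,
            intervalIntegral.integral_of_le haR]
  -- lower bound on the swapped integral
  have hbRR : b * R ≤ R := by nlinarith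
  have hsub2 : Icc a (b * R) ⊆ Icc a R := Icc_subset_Icc le_rfl hbRR
  have step2 : c * (∫⁻ x in Icc a (b * R), ENNReal.ofReal (φ x) ∂f) ≤
      ∫⁻ x, (∫⁻ z in Icc a R, F z x) ∂ν := by
    have h1 : (∫⁻ x in Icc a (b * R), ENNReal.ofReal (φ x) ∂f) =
        ∫⁻ x in Icc a (b * R), ENNReal.ofReal (φ' x) ∂f := by
      refine setLIntegral_congr_fun measurableSet_Icc ?_
      intro x hx
      simp only [hφ'eq x hx.1]
    rw [h1, ← lintegral_const_mul' _ _ ENNReal.ofReal_ne_top]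
    calc (∫⁻ x in Icc a (b * R), c * ENNReal.ofReal (φ' x) ∂f)
        ≤ ∫⁻ x in Icc a (b * R), (∫⁻ z in Icc a R, F z x) ∂f := by
          refine lintegral_mono_ae ?_
          filter_upwards [ae_restrict_mem measurableSet_Icc] with x hx
          exact hG x hx
      _ = ∫⁻ x in Icc a (b * R), (∫⁻ z in Icc a R, F z x) ∂ν := by
          rw [hν, Measure.restrict_restrict measurableSet_Icc,
            inter_eq_left.mpr hsub2]
      _ ≤ ∫⁻ x, (∫⁻ z in Icc a R, F z x) ∂ν := setLIntegral_le_lintegral _ _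
  -- key bound for the first region
  have key : (∫⁻ x in Icc a (b * R), ENNReal.ofReal (φ x) ∂f) ≤
      ENNReal.ofReal ((∫ z in a..R, g z) / |Real.log b|) := by
    have h := le_trans step2 (le_trans (le_of_eq swap.symm) step1)
    rw [habs, ENNReal.ofReal_div_of_pos hL]
    rw [ENNReal.le_div_iff_mul_le (Or.inl hc0) (Or.inl ENNReal.ofReal_ne_top)]
    rw [mul_comm]
    exact h
  -- second region
  have hT2 : (∫⁻ x in Icc (b * R) R, ENNReal.ofReal (φ x) ∂f) ≤
      ENNReal.ofReal (R * g R) := havg R ⟨haR, le_rfl⟩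
  -- combine
  have hsplit : Icc a R ⊆ Icc a (b * R) ∪ Icc (b * R) R := by
    intro x hx
    by_cases h : x ≤ b * R
    · exact Or.inl ⟨hx.1, h⟩
    · exact Or.inr ⟨le_of_lt (not_le.mp h), hx.2⟩
  calc (∫⁻ x in Icc a R, ENNReal.ofReal (φ x) ∂f)
      ≤ ∫⁻ x in Icc a (b * R) ∪ Icc (b * R) R, ENNReal.ofReal (φ x) ∂f :=
        lintegral_mono_set hsplit
    _ ≤ (∫⁻ x in Icc a (b * R), ENNReal.ofReal (φ x) ∂f) +
          ∫⁻ x in Icc (b * R) R, ENNReal.ofReal (φ x) ∂f := lintegral_union_le _ _ _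
    _ ≤ ENNReal.ofReal ((∫ z in a..R, g z) / |Real.log b|) + ENNReal.ofReal (R * g R) :=
        add_le_add key hT2
    _ = ENNReal.ofReal ((∫ z in a..R, g z) / |Real.log b| + R * g R) := by
        rw [← ENNReal.ofReal_add (by positivity) (mul_nonneg hR0.le (hg0 R))]
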